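/- arXiv:2006.10062 — 4 statements merged into one kernel-verified Lean document; each statement's English description precedes it below -/
import Mathlib

section
/- Let Γ be a family of linear maps on an algebra A indexed by subsets of a finite set Λ, satisfying Γ_X ∘ Γ_Y = Γ_{X∩Y} and Γ_Λ = id. Define Φ(Z) = Σ_{X ⊆ Z} (-1)^{|Z|-|X|} Γ_X(H) for a fixed H ∈ A. Then for any Y ⊆ Λ and Z ⊆ Λ with Z not contained in Y, Γ_Y(Φ(Z)) = 0. -/
theorem canonical_potential_canonical_form {α : Type*} [DecidableEq α]
    {A : Type*} [AddCommGroup A] [Module ℂ A] (Λ : Finset α)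
    (Γ : Finset α → A →ₗ[ℂ] A)
    (hcomp : ∀ X Y : Finset α, (Γ X).comp (Γ Y) = Γ (X ∩ Y))
    (hΛ : Γ Λ = LinearMap.id) (H : A)
    (Y Z : Finset α) (hY : Y ⊆ Λ) (hZ : Z ⊆ Λ) (hnot : ¬ Z ⊆ Y) :
    Γ Y (∑ X ∈ Z.powerset, (-1 : ℤ) ^ (Z.card - X.card) • Γ X H) = 0 := by
  obtain ⟨a, haZ, haY⟩ : ∃ a, a ∈ Z ∧ a ∉ Y := by
    by_contra h
    push_neg at h
    exact hnot h
  rw [map_sum]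
  have key : ∀ X : Finset α, Γ Y ((-1 : ℤ) ^ (Z.card - X.card) • Γ X H)
      = (-1 : ℤ) ^ (Z.card - X.card) • Γ (Y ∩ X) H := by
    intro X
    rw [map_zsmul, ← LinearMap.comp_apply, hcomp]
  simp only [key]
  apply Finset.sum_involution
    (g := fun X _ => if a ∈ X then X.erase a else insert a X)
  · intro X hX
    rw [Finset.mem_powerset] at hX
    have hcard : X.card ≤ Z.card := Finset.card_le_card hX
    by_cases ha : a ∈ X
    · simp only [ha, if_true]
      have hset : Y ∩ X.erase a = Y ∩ X := by
        ext x; simp only [Finset.mem_inter, Finset.mem_erase]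
        constructor
        · rintro ⟨h1, _, h2⟩; exact ⟨h1, h2⟩
        · rintro ⟨h1, h2⟩; exact ⟨h1, fun hxa => haY (hxa ▸ h1), h2⟩
      have hc : (X.erase a).card = X.card - 1 := Finset.card_erase_of_mem ha
      have h1 : 1 ≤ X.card := Finset.card_pos.mpr ⟨a, ha⟩
      have : Z.card - (X.erase a).card = (Z.card - X.card) + 1 := by omega
      rw [hset, this, pow_succ]
      rw [← add_smul]
      ring_nf
      simp
    · simp only [ha, if_false]
      have hset : Y ∩ insert a X = Y ∩ X := by
        ext x; simp only [Finset.mem_inter, Finset.mem_insert]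
        constructor
        · rintro ⟨h1, h2 | h2⟩
          · exact absurd (h2 ▸ h1) haY
          · exact ⟨h1, h2⟩
        · rintro ⟨h1, h2⟩; exact ⟨h1, Or.inr h2⟩
      have hc : (insert a X).card = X.card + 1 := Finset.card_insert_of_notMem ha
      have hlt : X.card < Z.card := Finset.card_lt_card (Finset.ssubset_iff_of_subset hX |>.mpr ⟨a, haZ, ha⟩)
      have : Z.card - X.card = (Z.card - (insert a X).card) + 1 := by omega
      rw [hset, this, pow_succ]
      rw [← add_smul]
      ring_nf
      simp
  · intro X hX h
    by_cases ha : a ∈ X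
    · simp only [ha, if_true]
      intro heq
      exact absurd (heq ▸ Finset.notMem_erase a X) (fun h' => h' ha)
    · simp only [ha, if_false]
      intro heq
      exact ha (heq ▸ Finset.mem_insert_self a X)
  · intro X hX
    by_cases ha : a ∈ X
    · simp [ha, Finset.insert_erase ha]
    · simp [ha, Finset.erase_insert ha]
  · intro X hX
    rw [Finset.mem_powerset] at hX
    simp only [Finset.mem_powerset]
    by_cases ha : a ∈ X
    · simp only [ha, if_true]
      exact (Finset.erase_subset a X).trans hX
    · simp only [ha, if_false]
      exact Finset.insert_subset haZ hX
end

section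
/- Under the hypotheses of the canonical-form construction, if H = Σ_{Y ⊆ Λ, |Y| ≤ k} Φ₀(Y) where each Φ₀(Y) satisfies Γ_X(Φ₀(Y)) = Γ_{X∩Y}(Φ₀(Y)) for all X ⊆ Λ, then the canonical potential Φ̂(Z) = Σ_{X ⊆ Z} (-1)^{|Z|-|X|} Γ_X(H) vanishes whenever |Z| > k. -/
theorem canonical_potential_k_body {α : Type*} [DecidableEq α]
    {A : Type*} [AddCommGroup A] [Module ℂ A] (Λ : Finset α) (k : ℕ)
    (Γ : Finset α → A →ₗ[ℂ] A)
    (hcomp : ∀ X Y : Finset α, (Γ X).comp (Γ Y) = Γ (X ∩ Y))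
    (hΛ : Γ Λ = LinearMap.id)
    (Φ₀ : Finset α → A)
    (hk : ∀ Y : Finset α, k < Y.card → Φ₀ Y = 0)
    (hsupp : ∀ X Y : Finset α, X ⊆ Λ → Y ⊆ Λ → Γ X (Φ₀ Y) = Γ (X ∩ Y) (Φ₀ Y))
    (H : A)
    (hH : H = ∑ Y ∈ Λ.powerset.filter (fun Y => Y.card ≤ k), Φ₀ Y)
    (Z : Finset α) (hZ : Z ⊆ Λ) (hZk : k < Z.card) :
    ∑ X ∈ Z.powerset, (-1 : ℤ) ^ (Z.card - X.card) • Γ X H = 0 := by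
  subst hH
  simp_rw [map_sum, Finset.smul_sum]
  rw [Finset.sum_comm]
  apply Finset.sum_eq_zero
  intro Y hY
  simp only [Finset.mem_filter, Finset.mem_powerset] at hY
  obtain ⟨hYΛ, hYk⟩ := hY
  have hZY : ¬ Z ⊆ Y := fun h => absurd (Finset.card_le_card h) (by omega)
  obtain ⟨z, hzZ, hzY⟩ := Finset.not_subset.mp hZY
  have hrw : ∀ X ∈ Z.powerset, (-1:ℤ)^(Z.card - X.card) • Γ X (Φ₀ Y)
      = (-1:ℤ)^(Z.card - X.card) • Γ (X ∩ Y) (Φ₀ Y) := by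
    intro X hX
    rw [hsupp X Y ((Finset.mem_powerset.mp hX).trans hZ) hYΛ]
  rw [Finset.sum_congr rfl hrw]
  have g_mem : ∀ X ∈ Z.powerset,
      (if z ∈ X then X.erase z else insert z X) ∈ Z.powerset := by
    intro X hX
    rw [Finset.mem_powerset] at hX ⊢
    by_cases hz : z ∈ X
    · simpa [hz] using (Finset.erase_subset z X).trans hX
    · simp only [hz, if_neg, if_false]
      exact Finset.insert_subset hzZ hX
  apply Finset.sum_involution (fun X _ => if z ∈ X then X.erase z else insert z X)
    ?_ ?_ g_mem ?_
  · intro X hX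
    rw [Finset.mem_powerset] at hX
    by_cases hz : z ∈ X
    · simp only [hz, if_true]
      have h1 : (X.erase z) ∩ Y = X ∩ Y := by
        ext a; simp only [Finset.mem_inter, Finset.mem_erase]
        constructor
        · rintro ⟨⟨_, ha⟩, hy⟩; exact ⟨ha, hy⟩
        · rintro ⟨ha, hy⟩; exact ⟨⟨fun h => hzY (h ▸ hy), ha⟩, hy⟩
      have hc1 : 1 ≤ X.card := Finset.card_pos.mpr ⟨z, hz⟩
      have hc2 : X.card ≤ Z.card := Finset.card_le_card hX
      have h2 : Z.card - (X.erase z).card = (Z.card - X.card) + 1 := by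
        rw [Finset.card_erase_of_mem hz]; omega
      rw [h1, h2, pow_succ, ← add_smul]
      simp
    · simp only [hz, if_neg, if_false]
      have h1 : (insert z X) ∩ Y = X ∩ Y := by
        ext a; simp only [Finset.mem_inter, Finset.mem_insert]
        constructor
        · rintro ⟨h | ha, hy⟩
          · exact absurd (h ▸ hy) hzY
          · exact ⟨ha, hy⟩
        · rintro ⟨ha, hy⟩; exact ⟨Or.inr ha, hy⟩
      have hc2 : (insert z X).card ≤ Z.card :=
        Finset.card_le_card (Finset.insert_subset hzZ hX)
      have hc3 : (insert z X).card = X.card + 1 := Finset.card_insert_of_notMem hz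
      have h2 : Z.card - X.card = (Z.card - (insert z X).card) + 1 := by omega
      rw [h1, h2, pow_succ, ← add_smul]
      simp
  · intro X hX _
    by_cases hz : z ∈ X
    · simp only [hz, if_true]
      exact fun h => (Finset.erase_ne_self.mpr hz) h
    · simp only [hz, if_neg, if_false]
      exact fun h => (Finset.insert_ne_self.mpr hz) h
  · intro X hX
    by_cases hz : z ∈ X
    · simp [hz, Finset.notMem_erase, Finset.insert_erase hz]
    · simp [hz, Finset.erase_insert hz]
end

section
/- Fix self-adjoint matrix H and matrices A, B with [A,B]=0. If ‖[e^{iHt} A e^{−iHt}, B]‖ ≤ h(t) for all t ≥ 0, where h is differentiable with h(0) = 0, then ‖[[H, A], B]‖ ≤ h'(0). -/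
open scoped Matrix.Norms.L2Operator

/-- If the commutator `‖[e^{iHt} A e^{-iHt}, B]‖` is bounded by `h(t)` for all
`t ≥ 0`, with `h` differentiable at `0` and `h(0) = 0`, and `[A, B] = 0`, then
`‖[[H, A], B]‖ ≤ h'(0)`. -/
theorem double_commutator_bound_of_commutator_bound {n : Type*} [Fintype n] [DecidableEq n]
    (H A B : Matrix n n ℂ) (hH : H.IsHermitian) (hAB : A * B = B * A)
    (h : ℝ → ℝ) (hh0 : h 0 = 0) (hhd : DifferentiableAt ℝ h 0)
    (hbound : ∀ t : ℝ, 0 ≤ t →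
      ‖(NormedSpace.exp ((Complex.I * t) • H) * A *
          NormedSpace.exp ((-(Complex.I * t)) • H)) * B -
        B * (NormedSpace.exp ((Complex.I * t) • H) * A *
          NormedSpace.exp ((-(Complex.I * t)) • H))‖ ≤ h t) :
    ‖(H * A - A * H) * B - B * (H * A - A * H)‖ ≤ deriv h 0 := by
  classical
  set M : Matrix n n ℂ := Complex.I • H with hMdef
  set C : Matrix n n ℂ := (H * A - A * H) * B - B * (H * A - A * H) with hCdef
  set g : ℝ → Matrix n n ℂ := fun t =>
    (NormedSpace.exp ((Complex.I * t) • H) * A *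
        NormedSpace.exp ((-(Complex.I * t)) • H)) * B -
      B * (NormedSpace.exp ((Complex.I * t) • H) * A *
        NormedSpace.exp ((-(Complex.I * t)) • H)) with hgdef
  -- rewrite the exponents
  have hsm1 : ∀ t : ℝ, (Complex.I * (t : ℂ)) • H = (t : ℂ) • M := by
    intro t; rw [hMdef, mul_comm, mul_smul]
  have hsm2 : ∀ t : ℝ, (-(Complex.I * (t : ℂ))) • H = (t : ℂ) • (-M) := by
    intro t; rw [neg_smul, hsm1, smul_neg]
  -- derivatives of the exponentials at 0
  have he1 : HasDerivAt (fun t : ℝ => NormedSpace.exp ((Complex.I * t) • H)) M 0 := by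
    have h0 : HasDerivAt (fun z : ℂ => NormedSpace.exp (z • M))
        (NormedSpace.exp ((Complex.ofRealCLM (0:ℝ)) • M) * M) (Complex.ofRealCLM (0:ℝ)) :=
      hasDerivAt_exp_smul_const M _
    have h1 : HasDerivAt (fun t : ℝ => NormedSpace.exp ((t : ℂ) • M)) M 0 := by
      have h2 := HasDerivAt.scomp (0:ℝ) h0 Complex.ofRealCLM.hasDerivAt
      refine h2.congr_deriv ?_
      simp
    have hfe : (fun t : ℝ => NormedSpace.exp ((Complex.I * t) • H)) =
        fun t : ℝ => NormedSpace.exp ((t : ℂ) • M) := funext fun t => by rw [hsm1]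
    rw [hfe]
    exact h1
  have he2 : HasDerivAt (fun t : ℝ => NormedSpace.exp ((-(Complex.I * t)) • H)) (-M) 0 := by
    have h0 : HasDerivAt (fun z : ℂ => NormedSpace.exp (z • (-M)))
        (NormedSpace.exp ((Complex.ofRealCLM (0:ℝ)) • (-M)) * (-M)) (Complex.ofRealCLM (0:ℝ)) :=
      hasDerivAt_exp_smul_const (-M) _
    have h1 : HasDerivAt (fun t : ℝ => NormedSpace.exp ((t : ℂ) • (-M))) (-M) 0 := by
      have h2 := HasDerivAt.scomp (0:ℝ) h0 Complex.ofRealCLM.hasDerivAt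
      refine h2.congr_deriv ?_
      simp
    have hfe : (fun t : ℝ => NormedSpace.exp ((-(Complex.I * t)) • H)) =
        fun t : ℝ => NormedSpace.exp ((t : ℂ) • (-M)) := funext fun t => by rw [hsm2]
    rw [hfe]
    exact h1
  -- derivative of g at 0
  have hf : HasDerivAt (fun t : ℝ =>
      NormedSpace.exp ((Complex.I * t) • H) * A *
        NormedSpace.exp ((-(Complex.I * t)) • H)) (M * A - A * M) 0 := by
    have h1 := (he1.mul_const A).mul he2
    simp only [Complex.ofReal_zero, mul_zero, zero_smul, NormedSpace.exp_zero, one_mul,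
      mul_one, neg_zero] at h1
    refine h1.congr_deriv ?_
    noncomm_ring
  have hg' : HasDerivAt g (Complex.I • C) 0 := by
    have h2 := (hf.mul_const B).sub ((hasDerivAt_const (0 : ℝ) B).mul hf)
    simp only [Complex.ofReal_zero, mul_zero, zero_smul, NormedSpace.exp_zero, one_mul,
      mul_one, neg_zero, zero_mul, add_zero, zero_add] at h2
    refine h2.congr_deriv ?_
    symm
    rw [hCdef, hMdef]
    simp only [smul_sub, smul_mul_assoc, mul_smul_comm, sub_mul, mul_sub]
  have hg0 : g 0 = 0 := by
    simp only [hgdef, Complex.ofReal_zero, mul_zero, zero_smul, neg_zero,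
      NormedSpace.exp_zero, one_mul, mul_one, hAB, sub_self]
  -- slope of g tends to I • C on 𝓝[>] 0
  have hslopeg : Filter.Tendsto (fun t : ℝ => ‖t⁻¹ • g t‖) (nhdsWithin 0 (Set.Ioi 0))
      (nhds ‖Complex.I • C‖) := by
    have h3 : Filter.Tendsto (slope g 0) (nhdsWithin 0 (Set.Ioi 0)) (nhds (Complex.I • C)) :=
      (hasDerivAt_iff_tendsto_slope.mp hg').mono_left
        (nhdsWithin_mono 0 fun x hx => ne_of_gt hx)
    have h4 := (continuous_norm.tendsto _).comp h3
    refine h4.congr' ?_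
    filter_upwards [self_mem_nhdsWithin] with t ht
    simp [slope_def_module, hg0]
  -- slope of h tends to deriv h 0
  have hslopeh : Filter.Tendsto (fun t : ℝ => t⁻¹ * h t) (nhdsWithin 0 (Set.Ioi 0))
      (nhds (deriv h 0)) := by
    have h3 : Filter.Tendsto (slope h 0) (nhdsWithin 0 (Set.Ioi 0)) (nhds (deriv h 0)) :=
      (hasDerivAt_iff_tendsto_slope.mp hhd.hasDerivAt).mono_left
        (nhdsWithin_mono 0 fun x hx => ne_of_gt hx)
    refine h3.congr' ?_
    filter_upwards [self_mem_nhdsWithin] with t ht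
    simp [slope_def_field, hh0, div_eq_inv_mul]
  have key : ‖Complex.I • C‖ ≤ deriv h 0 := by
    refine le_of_tendsto_of_tendsto hslopeg hslopeh ?_
    filter_upwards [self_mem_nhdsWithin] with t ht
    have ht' : (0 : ℝ) < t := ht
    rw [norm_smul, Real.norm_eq_abs, abs_inv, abs_of_pos ht']
    exact mul_le_mul_of_nonneg_left (hbound t ht'.le) (inv_nonneg.mpr ht'.le)
  calc ‖C‖ = ‖Complex.I • C‖ := by rw [norm_smul, Complex.norm_I, one_mul]
    _ ≤ deriv h 0 := key
end

section
/- (Recursive bound on potential terms) Let Φ be a function from subsets of a finite set Λ to matrices with Φ(Z) = 0 whenever |Z| > k, and suppose that for every Z with |Z| ≥ 2 and every pair x ≠ y ∈ Z, ‖ Σ_{Z' ⊆ Z, x ∈ Z', y ∈ Z'} Φ(Z') ‖ ≤ ε. Then there is a constant m_k depending only on k (one may take m_k = 2^{k-2}) such that ‖Φ(Z)‖ ≤ m_k ε for all Z with |Z| ≥ 2. -/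
open scoped Matrix.Norms.L2Operator

/-- Möbius inversion over the powerset lattice: the value of `g` at `U` can be
recovered from the partial sums `A ↦ ∑ B ⊆ A, g B` with alternating signs. -/
lemma mobius_powerset_aux {α : Type*} {M : Type*} [DecidableEq α] [AddCommGroup M]
    [Module ℝ M] (U : Finset α) (g : Finset α → M) :
    ∑ A ∈ U.powerset, ((-1 : ℝ) ^ (U.card - A.card)) • ∑ B ∈ A.powerset, g B = g U := by
  induction U using Finset.induction_on generalizing g with
  | empty => simp
  | @insert a s ha ih =>
    have hinj : ∀ A ∈ s.powerset, ∀ B ∈ s.powerset, insert a A = insert a B → A = B := by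
      intro A hA B hB h
      have hA' : a ∉ A := fun hc => ha (Finset.mem_powerset.mp hA hc)
      have hB' : a ∉ B := fun hc => ha (Finset.mem_powerset.mp hB hc)
      have := congrArg (fun t => Finset.erase t a) h
      simpa [Finset.erase_insert hA', Finset.erase_insert hB'] using this
    have hdisj : Disjoint s.powerset (s.powerset.image (insert a)) := by
      rw [Finset.disjoint_right]
      intro A hA hA'
      obtain ⟨B, _, rfl⟩ := Finset.mem_image.mp hA
      exact ha (Finset.mem_powerset.mp hA' (Finset.mem_insert_self a B))
    have hsplit : ∀ (f : Finset α → M),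
        ∑ A ∈ (insert a s).powerset, f A
          = ∑ A ∈ s.powerset, f A + ∑ A ∈ s.powerset, f (insert a A) := by
      intro f
      rw [Finset.powerset_insert, Finset.sum_union hdisj, Finset.sum_image hinj]
    rw [hsplit]
    have hcard : (insert a s).card = s.card + 1 := Finset.card_insert_of_notMem ha
    have hsum1 : ∑ A ∈ s.powerset,
        ((-1 : ℝ) ^ ((insert a s).card - A.card)) • ∑ B ∈ A.powerset, g B
        = - ∑ A ∈ s.powerset, ((-1 : ℝ) ^ (s.card - A.card)) • ∑ B ∈ A.powerset, g B := by
      rw [← Finset.sum_neg_distrib]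
      refine Finset.sum_congr rfl fun A hA => ?_
      have hAc : A.card ≤ s.card := Finset.card_le_card (Finset.mem_powerset.mp hA)
      have : (insert a s).card - A.card = (s.card - A.card) + 1 := by omega
      rw [this, pow_succ]
      simp [neg_smul]
    have hsum2 : ∑ A ∈ s.powerset,
        ((-1 : ℝ) ^ ((insert a s).card - (insert a A).card)) •
          ∑ B ∈ (insert a A).powerset, g B
        = ∑ A ∈ s.powerset, ((-1 : ℝ) ^ (s.card - A.card)) • ∑ B ∈ A.powerset, g B
          + ∑ A ∈ s.powerset, ((-1 : ℝ) ^ (s.card - A.card)) •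
              ∑ B ∈ A.powerset, g (insert a B) := by
      rw [← Finset.sum_add_distrib]
      refine Finset.sum_congr rfl fun A hA => ?_
      have haA : a ∉ A := fun hc => ha (Finset.mem_powerset.mp hA hc)
      have hAcard : (insert a A).card = A.card + 1 := Finset.card_insert_of_notMem haA
      have hdisjA : Disjoint A.powerset (A.powerset.image (insert a)) := by
        rw [Finset.disjoint_right]
        intro B hB hB'
        obtain ⟨C, _, rfl⟩ := Finset.mem_image.mp hB
        exact haA (Finset.mem_powerset.mp hB' (Finset.mem_insert_self a C))
      have hinjA : ∀ B ∈ A.powerset, ∀ C ∈ A.powerset, insert a B = insert a C → B = C := by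
        intro B hB C hC h
        have hB' : a ∉ B := fun hc => haA (Finset.mem_powerset.mp hB hc)
        have hC' : a ∉ C := fun hc => haA (Finset.mem_powerset.mp hC hc)
        have := congrArg (fun t => Finset.erase t a) h
        simpa [Finset.erase_insert hB', Finset.erase_insert hC'] using this
      have hexp : (insert a s).card - (insert a A).card = s.card - A.card := by
        have hAc : A.card ≤ s.card := Finset.card_le_card (Finset.mem_powerset.mp hA)
        omega
      rw [hexp, Finset.powerset_insert, Finset.sum_union hdisjA, Finset.sum_image hinjA,
        smul_add]
    rw [hsum1, hsum2, ih (fun B => g (insert a B))]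
    abel

/-- Recursive bound on the terms of a `k`-body potential in canonical form:
if for every region `Z` and pair `x ≠ y ∈ Z` the sum of potential terms inside
`Z` containing both `x` and `y` has norm at most `ε`, then every individual
potential term on at least two sites is bounded by `2^(k-2) ε`. -/
theorem potential_terms_bound {α : Type*} [DecidableEq α] {n : Type*}
    [Fintype n] [DecidableEq n]
    (Λ : Finset α) (k : ℕ) (Φ : Finset α → Matrix n n ℂ) (ε : ℝ)
    (hk : ∀ Z : Finset α, k < Z.card → Φ Z = 0)
    (hbound : ∀ Z : Finset α, Z ⊆ Λ → ∀ x ∈ Z, ∀ y ∈ Z, x ≠ y →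
      ‖∑ Z' ∈ Z.powerset.filter (fun Z' => x ∈ Z' ∧ y ∈ Z'), Φ Z'‖ ≤ ε) :
    ∀ Z : Finset α, Z ⊆ Λ → 2 ≤ Z.card → ‖Φ Z‖ ≤ (2 : ℝ) ^ (k - 2) * ε := by
  intro Z hZΛ hcard
  obtain ⟨x, hx, y, hy, hxy⟩ := Finset.one_lt_card.mp hcard
  have hε : 0 ≤ ε := le_trans (norm_nonneg _) (hbound Z hZΛ x hx y hy hxy)
  have hpow1 : (1 : ℝ) ≤ (2 : ℝ) ^ (k - 2) := one_le_pow₀ (by norm_num)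
  by_cases hkZ : Z.card ≤ k
  · -- Möbius inversion over subsets of `Z \ {x, y}`
    set U : Finset α := Z \ {x, y} with hUdef
    have hxyZ : ({x, y} : Finset α) ⊆ Z := by
      intro t ht
      rcases Finset.mem_insert.mp ht with rfl | ht
      · exact hx
      · rw [Finset.mem_singleton.mp ht]; exact hy
    have hcardxy : ({x, y} : Finset α).card = 2 := Finset.card_pair hxy
    have hUcard : U.card = Z.card - 2 := by
      rw [hUdef, Finset.card_sdiff_of_subset hxyZ, hcardxy]
    have key := mobius_powerset_aux U (fun A => Φ (A ∪ {x, y}))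
    have hUZ : U ∪ {x, y} = Z := by
      rw [hUdef, Finset.sdiff_union_of_subset hxyZ]
    rw [hUZ] at key
    -- rewrite inner sums as the filtered sums from the hypothesis
    have hinner : ∀ A ∈ U.powerset,
        (∑ B ∈ A.powerset, Φ (B ∪ {x, y}))
          = ∑ Z' ∈ (A ∪ {x, y}).powerset.filter (fun Z' => x ∈ Z' ∧ y ∈ Z'), Φ Z' := by
      intro A hA
      have hAU : A ⊆ U := Finset.mem_powerset.mp hA
      have hAxy : ∀ t ∈ A, t ∉ ({x, y} : Finset α) := by
        intro t ht
        exact (Finset.mem_sdiff.mp (hAU ht)).2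
      refine Finset.sum_nbij' (fun B => B ∪ {x, y}) (fun Z' => Z' \ {x, y}) ?_ ?_ ?_ ?_ ?_
      · intro B hB
        have hBA : B ⊆ A := Finset.mem_powerset.mp hB
        refine Finset.mem_filter.mpr ⟨Finset.mem_powerset.mpr ?_, ?_, ?_⟩
        · exact Finset.union_subset_union hBA (Finset.Subset.refl _)
        · exact Finset.mem_union_right _ (Finset.mem_insert_self x {y})
        · exact Finset.mem_union_right _ (by simp)
      · intro Z' hZ'
        obtain ⟨hZ'p, hxZ', hyZ'⟩ := Finset.mem_filter.mp hZ'
        have hZ'sub : Z' ⊆ A ∪ {x, y} := Finset.mem_powerset.mp hZ'p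
        refine Finset.mem_powerset.mpr ?_
        intro t ht
        have ht1 := Finset.mem_sdiff.mp ht
        rcases Finset.mem_union.mp (hZ'sub ht1.1) with h | h
        · exact h
        · exact absurd h ht1.2
      · intro B hB
        have hBA : B ⊆ A := Finset.mem_powerset.mp hB
        show (B ∪ {x, y}) \ {x, y} = B
        rw [Finset.union_sdiff_right]
        exact Finset.sdiff_eq_self_of_disjoint (Finset.disjoint_left.mpr
          (fun t ht => hAxy t (hBA ht)))
      · intro Z' hZ'
        obtain ⟨hZ'p, hxZ', hyZ'⟩ := Finset.mem_filter.mp hZ'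
        show Z' \ {x, y} ∪ {x, y} = Z'
        rw [Finset.sdiff_union_of_subset]
        intro t ht
        rcases Finset.mem_insert.mp ht with rfl | ht
        · exact hxZ'
        · rw [Finset.mem_singleton.mp ht]; exact hyZ'
      · intro B _; rfl
    -- bound the norm
    have hterm : ∀ A ∈ U.powerset,
        ‖((-1 : ℝ) ^ (U.card - A.card)) • ∑ B ∈ A.powerset, Φ (B ∪ {x, y})‖ ≤ ε := by
      intro A hA
      have hAU : A ⊆ U := Finset.mem_powerset.mp hA
      rw [norm_smul]
      have habs : ‖(-1 : ℝ) ^ (U.card - A.card)‖ = 1 := by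
        rw [norm_pow, norm_neg, norm_one, one_pow]
      rw [habs, one_mul, hinner A hA]
      refine hbound (A ∪ {x, y}) ?_ x ?_ y ?_ hxy
      · refine Finset.union_subset ?_ ?_
        · exact (hAU.trans (Finset.sdiff_subset)).trans hZΛ
        · exact hxyZ.trans hZΛ
      · exact Finset.mem_union_right _ (Finset.mem_insert_self x {y})
      · exact Finset.mem_union_right _ (by simp)
    calc ‖Φ Z‖ = ‖∑ A ∈ U.powerset,
          ((-1 : ℝ) ^ (U.card - A.card)) • ∑ B ∈ A.powerset, Φ (B ∪ {x, y})‖ := by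
            rw [key]
      _ ≤ ∑ A ∈ U.powerset,
          ‖((-1 : ℝ) ^ (U.card - A.card)) • ∑ B ∈ A.powerset, Φ (B ∪ {x, y})‖ :=
            norm_sum_le _ _
      _ ≤ ∑ _A ∈ U.powerset, ε := Finset.sum_le_sum hterm
      _ = (U.powerset.card : ℝ) * ε := by rw [Finset.sum_const, nsmul_eq_mul]
      _ = (2 : ℝ) ^ U.card * ε := by rw [Finset.card_powerset]; push_cast; ring
      _ ≤ (2 : ℝ) ^ (k - 2) * ε := by
            refine mul_le_mul_of_nonneg_right ?_ hε
            refine pow_le_pow_right₀ (by norm_num) ?_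
            omega
  · rw [hk Z (lt_of_not_ge hkZ)]
    rw [norm_zero]
    exact mul_nonneg (by positivity) hε
end
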